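/- Let R be a commutative ring, n ≥ 2, and M an (n−1)×n matrix over R. For a nonempty subset K ⊆ {1,…,n} with |K| ≤ n−1, let p_K(M) denote the determinant of the |K|×|K| submatrix of M with row indices 1,…,|K| and column indices the elements of K taken in increasing order. Then for all subsets I, J ⊆ {1,…,n} with |I| + 2 ≤ |J|, one has Σ_{j ∈ J∖I} (−1)^{l_j} · p_{I∪{j}}(M) · p_{J∖{j}}(M) = 0, where l_j = #{k ∈ J : j < k} + #{i ∈ I : i < j}. In particular, every quadratic polynomial Σ_{j ∈ J∖I} (−1)^{l_j} p_{I∪{j}} p_{J∖{j}} in the Plücker variables lies in the kernel of the ring homomorphism φ_n sending each Plücker variable p_K to the minor p_K of the (n−1)×n matrix of indeterminates (x_{i,j}); these are the quadrics defining the flag variety Flag_n in its Plücker embedding. -/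

import Mathlib

open MvPolynomial

/-- The Plücker minor `p_K(M)`: the determinant of the `|K| × |K|` submatrix of the
`(n−1) × n` matrix `M` with row indices `1, …, |K|` and column indices the elements of `K`
in increasing order (junk value `0` if `|K| > n − 1`). -/
noncomputable def pminor {R : Type*} [CommRing R] {n : ℕ}
    (M : Matrix (Fin (n - 1)) (Fin n) R) (K : Finset (Fin n)) : R :=
  if h : K.card ≤ n - 1 then
    (Matrix.of fun a b : Fin K.card => M (Fin.castLE h a) ((K.orderIsoOfFin rfl b : Fin n))).det
  else 0

/-- The sign exponent `l_j = #{k ∈ J : j < k} + #{i ∈ I : i < j}`. -/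
def lexp {n : ℕ} (I J : Finset (Fin n)) (j : Fin n) : ℕ :=
  (J.filter fun k => j < k).card + (I.filter fun i => i < j).card

/-- Index type for the Plücker variables: nonempty proper subsets of `{1, …, n}`. -/
def PluckerIdx (n : ℕ) : Type :=
  {K : Finset (Fin n) // K.Nonempty ∧ K ≠ Finset.univ}

/-- The ring homomorphism `φ_n` sending each Plücker variable `p_K` to the minor `p_K`
of the `(n−1) × n` matrix of indeterminates `(x_{i,j})`. -/
noncomputable def pluckerMap (n : ℕ) (R : Type*) [CommRing R] :
    MvPolynomial (PluckerIdx n) R →ₐ[R] MvPolynomial (Fin (n - 1) × Fin n) R :=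
  MvPolynomial.aeval fun K =>
    pminor (Matrix.of fun i j => (MvPolynomial.X (i, j) : MvPolynomial (Fin (n - 1) × Fin n) R))
      K.val

lemma insert_cond {n : ℕ} {I J : Finset (Fin n)} (hIJ : I.card + 2 ≤ J.card) {j : Fin n}
    (hj : j ∈ J \ I) : (insert j I).Nonempty ∧ insert j I ≠ Finset.univ := by
  refine ⟨⟨j, Finset.mem_insert_self _ _⟩, fun h => ?_⟩
  have h1 : (insert j I).card ≤ I.card + 1 := Finset.card_insert_le _ _
  have h2 : J.card ≤ n := le_trans (Finset.card_le_univ J) (by simp)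
  rw [h, Finset.card_univ, Fintype.card_fin] at h1
  omega

lemma erase_cond {n : ℕ} {I J : Finset (Fin n)} (hIJ : I.card + 2 ≤ J.card) {j : Fin n}
    (hj : j ∈ J \ I) : (J.erase j).Nonempty ∧ J.erase j ≠ Finset.univ := by
  have hjJ : j ∈ J := (Finset.mem_sdiff.mp hj).1
  have hc : (J.erase j).card = J.card - 1 := Finset.card_erase_of_mem hjJ
  have h2 : J.card ≤ n := le_trans (Finset.card_le_univ J) (by simp)
  constructor
  · rw [← Finset.card_pos, hc]
    omega
  · intro h
    rw [h, Finset.card_univ, Fintype.card_fin] at hc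
    have : j ∈ J.erase j := h ▸ Finset.mem_univ j
    exact absurd this (Finset.notMem_erase j J)


lemma my_neg_one_pow_eq_of_even_add {R : Type*} [CommRing R] {a b : ℕ} (h : Even (a + b)) :
    ((-1 : R) ^ a) = (-1) ^ b := by
  calc ((-1:R)^a) = (-1)^a * ((-1)^(a+b)) := by rw [h.neg_one_pow, mul_one]
    _ = ((-1)^a * (-1)^a) * (-1)^b := by rw [pow_add, mul_assoc]
    _ = (-1)^b := by rw [← pow_add, ← two_mul, pow_mul, neg_one_sq, one_pow, one_mul]

lemma my_mem_iff_lt_card_of_lower {c : ℕ} (S : Finset (Fin c))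
    (hS : ∀ a b : Fin c, a ≤ b → b ∈ S → a ∈ S) (b : Fin c) :
    b ∈ S ↔ (b : ℕ) < S.card := by
  constructor
  · intro hb
    have h1 : Finset.Iic b ⊆ S := fun a ha => hS a b (Finset.mem_Iic.mp ha) hb
    have h2 := Finset.card_le_card h1
    rw [Fin.card_Iic] at h2; omega
  · intro hb
    by_contra hbS
    have h1 : S ⊆ Finset.Iio b := by
      intro a ha
      rw [Finset.mem_Iio]
      rcases lt_or_ge a b with h | h
      · exact h
      · exact absurd (hS b a h ha) hbS
    have h2 := Finset.card_le_card h1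
    rw [Fin.card_Iio] at h2; omega

lemma my_card_filter_orderEmbOfFin {n t : ℕ} (K : Finset (Fin n)) (h : K.card = t)
    (P : Fin n → Prop) [DecidablePred P] :
    (K.filter P).card = (Finset.univ.filter fun b : Fin t => P (K.orderEmbOfFin h b)).card := by
  refine (Finset.card_bij (fun b _ => K.orderEmbOfFin h b) ?_ ?_ ?_).symm
  · intro b hb; rw [Finset.mem_filter] at hb ⊢
    exact ⟨Finset.orderEmbOfFin_mem K h b, hb.2⟩
  · intro a _ b _ hab; exact (K.orderEmbOfFin h).injective hab
  · intro y hy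
    rw [Finset.mem_filter] at hy
    have hy' : y ∈ Set.range (K.orderEmbOfFin h) := by
      rw [Finset.range_orderEmbOfFin]; exact hy.1
    obtain ⟨b, hb⟩ := hy'
    exact ⟨b, Finset.mem_filter.mpr ⟨Finset.mem_univ b, hb ▸ hy.2⟩, hb⟩

lemma my_orderEmbOfFin_lt_iff {n t : ℕ} (K : Finset (Fin n)) (h : K.card = t) (x : Fin n)
    (b : Fin t) :
    K.orderEmbOfFin h b < x ↔ (b : ℕ) < (K.filter fun y => y < x).card := by
  rw [my_card_filter_orderEmbOfFin K h]
  have hlow : ∀ a b : Fin t, a ≤ b →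
      b ∈ (Finset.univ.filter fun b : Fin t => K.orderEmbOfFin h b < x) →
      a ∈ (Finset.univ.filter fun b : Fin t => K.orderEmbOfFin h b < x) := by
    intro a b hab hb
    simp only [Finset.mem_filter, Finset.mem_univ, true_and] at hb ⊢
    exact lt_of_le_of_lt ((K.orderEmbOfFin h).monotone hab) hb
  rw [← my_mem_iff_lt_card_of_lower _ hlow b]
  simp

lemma my_card_filter_lt_orderEmbOfFin {n t : ℕ} (K : Finset (Fin n)) (h : K.card = t)
    (k : Fin t) :
    (K.filter fun y => y < K.orderEmbOfFin h k).card = (k : ℕ) := by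
  rw [my_card_filter_orderEmbOfFin K h]
  have : (Finset.univ.filter fun b : Fin t => K.orderEmbOfFin h b < K.orderEmbOfFin h k)
      = Finset.Iio k := by
    ext b
    simp [Finset.mem_Iio, (K.orderEmbOfFin h).lt_iff_lt]
  rw [this, Fin.card_Iio]

lemma my_trichotomy_count {n t : ℕ} (K : Finset (Fin n)) (h : K.card = t) {j : Fin n}
    (hj : j ∈ K) :
    (K.filter fun y => y < j).card + (K.filter fun y => j < y).card + 1 = t := by
  classical
  have h1 := Finset.card_filter_add_card_filter_not (s := K) (p := fun y => y < j)
  have h2 : K.filter (fun y => ¬ y < j) = insert j (K.filter fun y => j < y) := by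
    ext y
    simp only [Finset.mem_filter, Finset.mem_insert, not_lt]
    constructor
    · rintro ⟨hyK, hle⟩
      rcases eq_or_lt_of_le hle with heq | hlt
      · exact Or.inl heq.symm
      · exact Or.inr ⟨hyK, hlt⟩
    · rintro (rfl | ⟨hyK, hlt⟩)
      · exact ⟨hj, le_refl _⟩
      · exact ⟨hyK, le_of_lt hlt⟩
  rw [h2, Finset.card_insert_of_notMem (by simp)] at h1
  omega



lemma my_pminor_eq {R : Type*} [CommRing R] {n : ℕ} (M : Matrix (Fin (n - 1)) (Fin n) R)
    (K : Finset (Fin n)) {t : ℕ} (h : K.card = t) (h2 : t ≤ n - 1) :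
    pminor M K =
      (Matrix.of fun a b : Fin t => M (Fin.castLE h2 a) (K.orderEmbOfFin h b)).det := by
  subst h
  rw [pminor, dif_pos h2]
  congr 1


lemma my_succAbove_val {c : ℕ} (pp : Fin (c+1)) (b' : Fin c) :
    ((pp.succAbove b') : ℕ) = if (b' : ℕ) < (pp : ℕ) then (b' : ℕ) else (b' : ℕ) + 1 := by
  have hcast : (Fin.castSucc b' < pp) ↔ (b' : ℕ) < (pp : ℕ) := by
    rw [Fin.lt_def]; simp
  rw [Fin.succAbove]
  rcases Nat.lt_or_ge (b' : ℕ) (pp : ℕ) with h | h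
  · rw [if_pos (hcast.mpr h), if_pos h]; simp
  · rw [if_neg (fun hcon => absurd (hcast.mp hcon) (by omega)), if_neg (by omega)]; simp

section
variable {n c : ℕ} {I : Finset (Fin n)} (hc : I.card = c) {j : Fin n}

-- description of the order embedding of `insert j I` via `insertNth`
lemma my_insert_emb_eq (hj : j ∉ I) (hcard : (insert j I).card = c + 1)
    (pp : Fin (c+1)) (hpv : (pp : ℕ) = (I.filter fun i => i < j).card) :
    ⇑((insert j I).orderEmbOfFin hcard)
      = Fin.insertNth (α := fun _ => Fin n) pp j (fun b' => I.orderEmbOfFin hc b') := by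
  set p : ℕ := (I.filter fun i => i < j).card with hp
  have hpc : p ≤ c := (Finset.card_filter_le I _).trans_eq hc
  have hppv : (pp : ℕ) = p := hpv
  set Iemb := I.orderEmbOfFin hc with hIemb
  have hlt : ∀ b : Fin c, Iemb b < j ↔ (b : ℕ) < p := fun b =>
    my_orderEmbOfFin_lt_iff I hc j b
  have hne : ∀ b : Fin c, Iemb b ≠ j := fun b h =>
    hj (h ▸ Finset.orderEmbOfFin_mem I hc b)
  have hgt : ∀ b : Fin c, j < Iemb b ↔ p ≤ (b : ℕ) := by
    intro b
    constructor
    · intro h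
      by_contra hcon
      exact absurd ((hlt b).mpr (by omega)) (asymm h)
    · intro h
      have h1 : ¬ Iemb b < j := by rw [hlt]; omega
      exact lt_of_le_of_ne (not_lt.mp h1) (hne b).symm
  have hsa : ∀ b' : Fin c, ((pp.succAbove b') : ℕ)
      = if (b' : ℕ) < p then (b' : ℕ) else (b' : ℕ) + 1 := by
    intro b'; rw [my_succAbove_val, hppv]
  set f : Fin (c+1) → Fin n := Fin.insertNth (α := fun _ => Fin n) pp j (fun b' => Iemb b')
    with hf
  have hmem : ∀ b : Fin (c+1), f b ∈ insert j I := by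
    intro b
    by_cases hb : b = pp
    · subst hb; simp only [hf, Fin.insertNth_apply_same]; exact Finset.mem_insert_self _ _
    · obtain ⟨b', rfl⟩ := Fin.exists_succAbove_eq hb
      simp only [hf, Fin.insertNth_apply_succAbove]
      exact Finset.mem_insert_of_mem (Finset.orderEmbOfFin_mem I hc b')
  have hmono : StrictMono f := by
    intro a b hab
    by_cases ha : a = pp <;> by_cases hb : b = pp
    · exact absurd (ha ▸ hb ▸ hab) (lt_irrefl _)
    · subst ha
      obtain ⟨b', rfl⟩ := Fin.exists_succAbove_eq hb
      simp only [hf, Fin.insertNth_apply_same, Fin.insertNth_apply_succAbove]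
      rw [hgt]
      have := hab
      rw [Fin.lt_def] at this
      rw [hsa b'] at this
      rw [hppv] at this
      split at this <;> omega
    · subst hb
      obtain ⟨a', rfl⟩ := Fin.exists_succAbove_eq ha
      simp only [hf, Fin.insertNth_apply_same, Fin.insertNth_apply_succAbove]
      rw [hlt]
      have := hab
      rw [Fin.lt_def] at this
      rw [hsa a'] at this
      rw [hppv] at this
      split at this <;> omega
    · obtain ⟨a', rfl⟩ := Fin.exists_succAbove_eq ha
      obtain ⟨b', rfl⟩ := Fin.exists_succAbove_eq hb
      simp only [hf, Fin.insertNth_apply_succAbove]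
      exact (I.orderEmbOfFin hc).strictMono (Fin.succAbove_lt_succAbove_iff.mp hab)
  exact (Finset.orderEmbOfFin_unique _ hmem hmono).symm
end


def myperm (c : ℕ) (pp : Fin (c+1)) : Equiv.Perm (Fin (c+1)) :=
  Fin.revPerm * Fin.cycleRange pp.rev * Fin.revPerm

lemma myperm_apply {c : ℕ} (pp b : Fin (c+1)) :
    myperm c pp b = Fin.rev (Fin.cycleRange pp.rev (Fin.rev b)) := rfl

lemma myperm_val {c : ℕ} (pp b : Fin (c+1)) :
    ((myperm c pp b) : ℕ)
      = if (b : ℕ) < (pp : ℕ) then (b : ℕ)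
        else if (b : ℕ) = (pp : ℕ) then c else (b : ℕ) - 1 := by
  rcases Nat.lt_trichotomy (b : ℕ) (pp : ℕ) with h | h | h
  · rw [if_pos h]
    have hgt : pp.rev < b.rev := by
      rw [Fin.lt_def, Fin.val_rev, Fin.val_rev]; omega
    rw [myperm_apply, Fin.cycleRange_of_gt hgt, Fin.rev_rev]
  · rw [if_neg (by omega), if_pos h]
    have hb : b.rev = pp.rev := by
      rw [Fin.ext_iff, Fin.val_rev, Fin.val_rev]; omega
    rw [myperm_apply, hb, Fin.cycleRange_self, Fin.val_rev]
    simp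
  · rw [if_neg (by omega), if_neg (by omega)]
    have hlt2 : b.rev < pp.rev := by
      rw [Fin.lt_def, Fin.val_rev, Fin.val_rev]; omega
    rw [myperm_apply, Fin.cycleRange_of_lt hlt2]
    have hlast : b.rev < Fin.last c := by
      rw [Fin.lt_def, Fin.val_rev, Fin.val_last]; omega
    rw [Fin.val_rev, Fin.val_add_one_of_lt hlast, Fin.val_rev]
    omega

lemma myperm_sign {c : ℕ} (pp : Fin (c+1)) :
    Equiv.Perm.sign (myperm c pp) = (-1) ^ (c - (pp : ℕ)) := by
  rw [myperm, map_mul, map_mul, Fin.sign_cycleRange, Fin.val_rev]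
  have h1 : c + 1 - ((pp : ℕ) + 1) = c - (pp : ℕ) := by omega
  rw [h1]
  set u : ℤˣ := Equiv.Perm.sign (Fin.revPerm : Equiv.Perm (Fin (c+1)))
  calc u * (-1) ^ (c - (pp : ℕ)) * u = (-1) ^ (c - (pp : ℕ)) * (u * u) := by
        rw [mul_comm u ((-1) ^ (c - (pp : ℕ))), mul_assoc]
    _ = (-1) ^ (c - (pp : ℕ)) := by rw [Int.units_mul_self, mul_one]


lemma my_A_insert {R : Type*} [CommRing R] {n c : ℕ} (hrn : c + 1 ≤ n - 1)
    (M : Matrix (Fin (n - 1)) (Fin n) R) {I : Finset (Fin n)} (hc : I.card = c) {j : Fin n}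
    (hj : j ∉ I) :
    (Matrix.of fun i b : Fin (c+1) =>
        M (Fin.castLE hrn i) (Fin.snoc (α := fun _ => Fin n)
            (fun b' : Fin c => I.orderEmbOfFin hc b') j b)).det
      = (-1 : R) ^ (c - (I.filter fun i => i < j).card) * pminor M (insert j I) := by
  set p : ℕ := (I.filter fun i => i < j).card with hp
  have hpc : p ≤ c := (Finset.card_filter_le I _).trans_eq hc
  set pp : Fin (c+1) := ⟨p, by omega⟩ with hpp
  have hppv : (pp : ℕ) = p := rfl
  have hcard : (insert j I).card = c + 1 := by rw [Finset.card_insert_of_notMem hj, hc]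
  rw [my_pminor_eq M _ hcard hrn, my_insert_emb_eq hc hj hcard pp hppv]
  have hkey : ∀ b : Fin (c+1),
      Fin.insertNth (α := fun _ => Fin n) pp j (fun b' => I.orderEmbOfFin hc b') b
        = Fin.snoc (α := fun _ => Fin n) (fun b' => I.orderEmbOfFin hc b') j
            (myperm c pp b) := by
    intro b
    rcases Nat.lt_trichotomy (b : ℕ) p with h | h | h
    · have hb' : (b : ℕ) < c := by omega
      have hsucc : pp.succAbove ⟨(b : ℕ), hb'⟩ = b := by
        apply Fin.ext
        rw [my_succAbove_val]
        simp only [hppv]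
        rw [if_pos h]
      rw [← hsucc, Fin.insertNth_apply_succAbove]
      have hpv2 : myperm c pp (pp.succAbove ⟨(b : ℕ), hb'⟩)
          = Fin.castSucc ⟨(b : ℕ), hb'⟩ := by
        apply Fin.ext
        rw [hsucc, myperm_val, hppv, if_pos h]
        simp
      rw [hpv2, Fin.snoc_castSucc]
    · have hb : b = pp := Fin.ext (by omega)
      rw [hb, Fin.insertNth_apply_same]
      have hpv2 : myperm c pp pp = Fin.last c := by
        apply Fin.ext
        rw [myperm_val, hppv, if_neg (by omega), if_pos rfl, Fin.val_last]
      rw [hpv2, Fin.snoc_last]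
    · have h1 : 0 < (b : ℕ) := by omega
      have hb' : (b : ℕ) - 1 < c := by omega
      have hsucc : pp.succAbove ⟨(b : ℕ) - 1, hb'⟩ = b := by
        apply Fin.ext
        rw [my_succAbove_val]
        simp only [hppv]
        rw [if_neg (by omega)]
        omega
      rw [← hsucc, Fin.insertNth_apply_succAbove]
      have hpv2 : myperm c pp (pp.succAbove ⟨(b : ℕ) - 1, hb'⟩)
          = Fin.castSucc ⟨(b : ℕ) - 1, hb'⟩ := by
        apply Fin.ext
        rw [hsucc, myperm_val, hppv, if_neg (by omega), if_neg (by omega)]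
        simp
      rw [hpv2, Fin.snoc_castSucc]
  have hmat : (Matrix.of fun a b : Fin (c+1) => M (Fin.castLE hrn a)
        (Fin.insertNth (α := fun _ => Fin n) pp j (fun b' => I.orderEmbOfFin hc b') b))
      = (Matrix.of fun a b : Fin (c+1) => M (Fin.castLE hrn a)
          (Fin.snoc (α := fun _ => Fin n) (fun b' : Fin c => I.orderEmbOfFin hc b') j b)
        ).submatrix id (myperm c pp) := by
    ext a b
    simp only [Matrix.of_apply, Matrix.submatrix_apply, id_eq, hkey b]
  rw [hmat, Matrix.det_permute', myperm_sign]
  push_cast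
  ring_nf
  rw [hppv, mul_assoc, ← pow_add, ← two_mul, pow_mul, neg_one_sq, one_pow, mul_one]


lemma my_A_zero_of_mem {R : Type*} [CommRing R] {n c : ℕ} (hrn : c + 1 ≤ n - 1)
    (M : Matrix (Fin (n - 1)) (Fin n) R) {I : Finset (Fin n)} (hc : I.card = c) {x : Fin n}
    (hx : x ∈ I) :
    (Matrix.of fun i b : Fin (c+1) =>
        M (Fin.castLE hrn i) (Fin.snoc (α := fun _ => Fin n)
          (fun b' : Fin c => I.orderEmbOfFin hc b') x b)).det = 0 := by
  obtain ⟨b0, hb0⟩ : ∃ b0 : Fin c, I.orderEmbOfFin hc b0 = x := by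
    have hx' : x ∈ Set.range (I.orderEmbOfFin hc) := by
      rw [Finset.range_orderEmbOfFin]; exact hx
    exact hx'
  refine Matrix.det_zero_of_column_eq (Fin.ne_of_lt (Fin.castSucc_lt_last b0)) fun k => ?_
  simp [Fin.snoc_castSucc, Fin.snoc_last, hb0]

lemma my_A_cofactor {R : Type*} [CommRing R] {n c : ℕ} (hrn : c + 1 ≤ n - 1)
    (M : Matrix (Fin (n - 1)) (Fin n) R) {I : Finset (Fin n)} (hc : I.card = c) (x : Fin n) :
    (Matrix.of fun i b : Fin (c+1) =>
        M (Fin.castLE hrn i) (Fin.snoc (α := fun _ => Fin n)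
          (fun b' : Fin c => I.orderEmbOfFin hc b') x b)).det
      = ∑ i : Fin (c+1),
          ((-1 : R) ^ ((i : ℕ) + c) *
            (Matrix.of fun i' b : Fin c =>
              M (Fin.castLE hrn (i.succAbove i')) (I.orderEmbOfFin hc b)).det)
            * M (Fin.castLE hrn i) x := by
  rw [Matrix.det_succ_column _ (Fin.last c)]
  refine Finset.sum_congr rfl fun i _ => ?_
  have h2 : ((Matrix.of fun i b : Fin (c+1) =>
      M (Fin.castLE hrn i) (Fin.snoc (α := fun _ => Fin n)
        (fun b' : Fin c => I.orderEmbOfFin hc b') x b)).submatrix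
        i.succAbove (Fin.last c).succAbove)
      = Matrix.of (fun i' b : Fin c =>
          M (Fin.castLE hrn (i.succAbove i')) (I.orderEmbOfFin hc b)) := by
    ext i' b
    simp [Fin.succAbove_last, Fin.snoc_castSucc]
  rw [h2]
  simp only [Matrix.of_apply, Fin.snoc_last, Fin.val_last]
  ring



lemma plucker_sum_eq_zero {R : Type*} [CommRing R] {n : ℕ}
    (M : Matrix (Fin (n - 1)) (Fin n) R) (I J : Finset (Fin n))
    (hIJ : I.card + 2 ≤ J.card) :
    ∑ j ∈ J \ I, (-1 : R) ^ lexp I J j * (pminor M (insert j I) * pminor M (J.erase j)) = 0 := by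
  classical
  obtain ⟨c, hc⟩ : ∃ c, I.card = c := ⟨_, rfl⟩
  have hmn : J.card ≤ n := by simpa using Finset.card_le_univ J
  obtain ⟨s, hs⟩ : ∃ s, J.card = s + 1 := ⟨J.card - 1, by omega⟩
  have hsn : s ≤ n - 1 := by omega
  have hrn : c + 1 ≤ n - 1 := by omega
  have hrs : c + 1 ≤ s := by omega
  set A : Fin n → R := fun x =>
    (Matrix.of fun i b : Fin (c+1) =>
      M (Fin.castLE hrn i) (Fin.snoc (α := fun _ => Fin n)
        (fun b' : Fin c => I.orderEmbOfFin hc b') x b)).det with hA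
  set e := J.orderEmbOfFin hs with he
  set N : Matrix (Fin (s+1)) (Fin (s+1)) R :=
    Matrix.of fun a k => Fin.cases (motive := fun _ => R) (A (e k))
      (fun a' => M (Fin.castLE hsn a') (e k)) a with hN
  have hNzero : ∀ k, N 0 k = A (e k) := by
    intro k; rw [hN]; simp only [Matrix.of_apply, Fin.cases_zero]
  have hNsucc : ∀ (a : Fin s) (k : Fin (s+1)), N a.succ k = M (Fin.castLE hsn a) (e k) := by
    intro a k; rw [hN]; simp only [Matrix.of_apply, Fin.cases_succ]
  -- determinant of N vanishes: row 0 is a combination of the other rows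
  have hNdet : N.det = 0 := by
    set Qd : Fin (c+1) → R := fun i =>
      (Matrix.of fun i' b : Fin c =>
        M (Fin.castLE hrn (i.succAbove i')) (I.orderEmbOfFin hc b)).det with hQd
    set coef : Fin (s+1) → R := fun a =>
      ∑ i : Fin (c+1), if (Fin.castLE hrs i).succ = a then (-1 : R) ^ ((i : ℕ) + c) * Qd i
        else 0 with hcoef
    set S : Finset (Fin (s+1)) :=
      Finset.univ.image (fun i : Fin (c+1) => (Fin.castLE hrs i).succ) with hS
    have hinj : ∀ a₁ : Fin (c+1), ∀ a₂ : Fin (c+1),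
        (Fin.castLE hrs a₁).succ = (Fin.castLE hrs a₂).succ → a₁ = a₂ := by
      intro a₁ a₂ h
      have := congrArg Fin.val h
      simp only [Fin.val_succ, Fin.coe_castLE] at this
      exact Fin.ext (by omega)
    have h0S : (0 : Fin (s+1)) ∉ S := by
      rw [hS]
      simp only [Finset.mem_image]
      rintro ⟨i, -, hi⟩
      exact (Fin.succ_ne_zero _) hi
    have hcoef_succ : ∀ i : Fin (c+1),
        coef ((Fin.castLE hrs i).succ) = (-1 : R) ^ ((i : ℕ) + c) * Qd i := by
      intro i
      rw [hcoef]
      beta_reduce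
      rw [Finset.sum_eq_single i]
      · rw [if_pos rfl]
      · intro b _ hb
        rw [if_neg (fun hcon => hb (hinj b i hcon))]
      · intro hcon
        exact absurd (Finset.mem_univ i) hcon
    have hrow : (0 : R) • N 0 + ∑ k ∈ S, coef k • N k = N 0 := by
      rw [zero_smul, zero_add, hS,
        Finset.sum_image (fun a _ b _ h => hinj a b h)]
      funext k
      rw [Finset.sum_apply]
      have hterm : ∀ i : Fin (c+1),
          (coef ((Fin.castLE hrs i).succ) • N ((Fin.castLE hrs i).succ)) k
            = ((-1 : R) ^ ((i : ℕ) + c) * Qd i) * M (Fin.castLE hrn i) (e k) := by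
        intro i
        rw [Pi.smul_apply, smul_eq_mul, hcoef_succ, hNsucc]
        rfl
      rw [Finset.sum_congr rfl fun i _ => hterm i, hNzero]
      exact (my_A_cofactor hrn M hc (e k)).symm
    have haux := Matrix.det_updateRow_sum_aux N (j := (0 : Fin (s+1))) S h0S coef 0
    rw [hrow, Matrix.updateRow_eq_self, zero_smul] at haux
    exact haux
  -- Laplace expansion along row 0
  have hexp := Matrix.det_succ_row_zero N
  rw [hNdet] at hexp
  -- identify the minors
  have hK3 : ∀ k : Fin (s+1),
      (N.submatrix Fin.succ k.succAbove).det = pminor M (J.erase (e k)) := by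
    intro k
    have hek : e k ∈ J := Finset.orderEmbOfFin_mem J hs k
    have hcard : (J.erase (e k)).card = s := by
      rw [Finset.card_erase_of_mem hek, hs]
      omega
    rw [my_pminor_eq M _ hcard hsn]
    have hemb : (fun b : Fin s => e (k.succAbove b))
        = ⇑((J.erase (e k)).orderEmbOfFin hcard) := by
      apply Finset.orderEmbOfFin_unique
      · intro b
        rw [Finset.mem_erase]
        exact ⟨fun hcon => Fin.succAbove_ne k b (e.injective hcon),
          Finset.orderEmbOfFin_mem J hs _⟩
      · exact e.strictMono.comp (Fin.strictMono_succAbove k)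
    congr 1
    ext a b
    rw [Matrix.submatrix_apply, hNsucc, Matrix.of_apply, ← congrFun hemb b]
  -- reindex the expansion as a sum over J
  have hsumJ : ∑ j ∈ J,
      ((-1 : R) ^ ((J.filter fun y => y < j).card) * (A j * pminor M (J.erase j))) = 0 := by
    have hbij : ∑ k : Fin (s+1),
        ((-1 : R) ^ (k : ℕ) * N 0 k * (N.submatrix Fin.succ k.succAbove).det)
        = ∑ j ∈ J, ((-1 : R) ^ ((J.filter fun y => y < j).card)
            * (A j * pminor M (J.erase j))) := by
      refine Finset.sum_bij (fun k _ => e k) (fun k _ => Finset.orderEmbOfFin_mem J hs k)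
        (fun a _ b _ h => e.injective h) (fun j hj => ?_) (fun k _ => ?_)
      · have hj' : j ∈ Set.range e := by rw [he, Finset.range_orderEmbOfFin]; exact hj
        obtain ⟨k, hk⟩ := hj'
        exact ⟨k, Finset.mem_univ k, hk⟩
      · rw [my_card_filter_lt_orderEmbOfFin J hs k, hNzero, hK3]
        ring
    rw [← hbij]
    exact hexp.symm
  -- terms with j ∈ I vanish
  have hinter : ∑ j ∈ J ∩ I,
      ((-1 : R) ^ ((J.filter fun y => y < j).card) * (A j * pminor M (J.erase j))) = 0 := by
    refine Finset.sum_eq_zero fun j hj => ?_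
    have hAj : A j = 0 := my_A_zero_of_mem hrn M hc (Finset.mem_inter.mp hj).2
    rw [hAj, zero_mul, mul_zero]
  have hdiff : ∑ j ∈ J \ I,
      ((-1 : R) ^ ((J.filter fun y => y < j).card) * (A j * pminor M (J.erase j))) = 0 := by
    have h := Finset.sum_inter_add_sum_sdiff J I
      (fun j => (-1 : R) ^ ((J.filter fun y => y < j).card) * (A j * pminor M (J.erase j)))
    rw [hsumJ, hinter, zero_add] at h
    exact h
  -- final sign bookkeeping
  calc ∑ j ∈ J \ I, (-1 : R) ^ lexp I J j * (pminor M (insert j I) * pminor M (J.erase j))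
      = ∑ j ∈ J \ I, (-1 : R) ^ (s + c) *
          ((-1 : R) ^ ((J.filter fun y => y < j).card) * (A j * pminor M (J.erase j))) := by
        refine Finset.sum_congr rfl fun j hj => ?_
        have hjJ : j ∈ J := (Finset.mem_sdiff.mp hj).1
        have hjI : j ∉ I := (Finset.mem_sdiff.mp hj).2
        have hins : A j = (-1 : R) ^ (c - (I.filter fun i => i < j).card)
            * pminor M (insert j I) := my_A_insert hrn M hc hjI
        have htri := my_trichotomy_count J hs hjJ
        have hpc : (I.filter fun i => i < j).card ≤ c :=
          (Finset.card_filter_le I _).trans_eq hc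
        have hsign : (-1 : R) ^ (lexp I J j)
            = (-1 : R) ^ ((s + c) + (((J.filter fun y => y < j).card)
                + (c - (I.filter fun i => i < j).card))) := by
          apply my_neg_one_pow_eq_of_even_add
          rw [Nat.even_iff]
          have hlexp : lexp I J j
              = (J.filter fun k => j < k).card + (I.filter fun i => i < j).card := rfl
          rw [hlexp]
          omega
        rw [hins, hsign, pow_add, pow_add]
        ring
    _ = (-1 : R) ^ (s + c) * ∑ j ∈ J \ I,
          ((-1 : R) ^ ((J.filter fun y => y < j).card) * (A j * pminor M (J.erase j))) :=
        (Finset.mul_sum _ _ _).symm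
    _ = 0 := by rw [hdiff, mul_zero]


/-- The Plücker relations: for subsets `I, J ⊆ {1,…,n}` with `|I| + 2 ≤ |J|`, the signed
sum `Σ_{j ∈ J∖I} (−1)^{l_j} p_{I∪{j}}(M) p_{J∖{j}}(M)` vanishes for every
`(n−1) × n` matrix `M`; in particular the corresponding quadratic polynomial in the
Plücker variables lies in the kernel of `φ_n`. -/
theorem plucker_relations {R : Type*} [CommRing R] (n : ℕ) (hn : 2 ≤ n)
    (M : Matrix (Fin (n - 1)) (Fin n) R) (I J : Finset (Fin n))
    (hIJ : I.card + 2 ≤ J.card) :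
    (∑ j ∈ J \ I, (-1 : R) ^ lexp I J j * (pminor M (insert j I) * pminor M (J.erase j)) = 0)
    ∧
    (∑ j ∈ (J \ I).attach,
        (-1 : MvPolynomial (PluckerIdx n) R) ^ lexp I J j.val *
          (X (⟨insert j.val I, insert_cond hIJ j.2⟩ : PluckerIdx n) *
            X (⟨J.erase j.val, erase_cond hIJ j.2⟩ : PluckerIdx n))) ∈
      RingHom.ker (pluckerMap n R).toRingHom := by
  classical
  refine ⟨plucker_sum_eq_zero M I J hIJ, ?_⟩
  have hmap : (pluckerMap n R).toRingHom
      (∑ j ∈ (J \ I).attach,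
        (-1 : MvPolynomial (PluckerIdx n) R) ^ lexp I J j.val *
          (X (⟨insert j.val I, insert_cond hIJ j.2⟩ : PluckerIdx n) *
            X (⟨J.erase j.val, erase_cond hIJ j.2⟩ : PluckerIdx n)))
      = ∑ j ∈ (J \ I).attach,
          (-1 : MvPolynomial (Fin (n - 1) × Fin n) R) ^ lexp I J j.val *
            (pminor (Matrix.of fun i j => (MvPolynomial.X (i, j) :
                MvPolynomial (Fin (n - 1) × Fin n) R)) (insert j.val I) *
              pminor (Matrix.of fun i j => (MvPolynomial.X (i, j) :
                MvPolynomial (Fin (n - 1) × Fin n) R)) (J.erase j.val)) := by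
    rw [map_sum]
    refine Finset.sum_congr rfl fun x _ => ?_
    show (pluckerMap n R).toRingHom ((-1 : MvPolynomial (PluckerIdx n) R) ^ lexp I J x.val *
      ((X (⟨insert x.val I, insert_cond hIJ x.2⟩ : PluckerIdx n) : MvPolynomial (PluckerIdx n) R) *
        (X (⟨J.erase x.val, erase_cond hIJ x.2⟩ : PluckerIdx n) : MvPolynomial (PluckerIdx n) R))) = _
    rw [map_mul, map_pow, map_neg, map_one, map_mul]
    simp only [AlgHom.toRingHom_eq_coe, RingHom.coe_coe, pluckerMap, MvPolynomial.aeval_X]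
    congr 2 <;> exact MvPolynomial.aeval_X _ _
  rw [RingHom.mem_ker, hmap,
    Finset.sum_attach (J \ I) (fun j =>
      (-1 : MvPolynomial (Fin (n - 1) × Fin n) R) ^ lexp I J j *
        (pminor (Matrix.of fun i j => (MvPolynomial.X (i, j) :
            MvPolynomial (Fin (n - 1) × Fin n) R)) (insert j I) *
          pminor (Matrix.of fun i j => (MvPolynomial.X (i, j) :
            MvPolynomial (Fin (n - 1) × Fin n) R)) (J.erase j)))]
  exact plucker_sum_eq_zero _ I J hIJ
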